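/- Let s ∈ (0,1) be irrational and suppose ⌊1/s⌋ is even (i.e. the first partial quotient a₁ in the continued fraction expansion s = [0; a₁, a₂, a₃, …] is even). Then s < 1/2, R(s) < 1/2, and R(R(s)) = γ(γ(s)). -/

import Mathlib

/-- The renormalization map `R : (0,1) → [0,1)`: `R(x) = 1 − x` if `x ≥ 1/2`, and
`R(x) = 1/(2x) − ⌊1/(2x)⌋` if `x < 1/2`. -/
noncomputable def Rmap (x : ℝ) : ℝ :=
  if x < 1/2 then 1 / (2 * x) - ⌊1 / (2 * x)⌋ else 1 - x

/-- The Gauss map `γ(x) = 1/x − ⌊1/x⌋`. -/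
noncomputable def gaussMap (x : ℝ) : ℝ := 1 / x - ⌊1 / x⌋

/-- Let `s ∈ (0,1)` be irrational with `⌊1/s⌋` even (the first partial
quotient of the continued fraction of `s` is even).  Then `s < 1/2`, `R(s) < 1/2`, and
`R(R(s)) = γ(γ(s))`. -/
theorem R_squared_eq_gauss_squared (s : ℝ) (hs : s ∈ Set.Ioo (0 : ℝ) 1)
    (hirr : Irrational s) (heven : Even ⌊1 / s⌋) :
    s < 1/2 ∧ Rmap s < 1/2 ∧ Rmap (Rmap s) = gaussMap (gaussMap s) := by
  obtain ⟨hs0, hs1⟩ := hs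
  obtain ⟨k, hk⟩ := heven
  have hinv_irr : Irrational (1 / s) := by
    simpa using hirr.inv
  have h1s : (1 : ℝ) < 1 / s := one_lt_one_div hs0 hs1
  have hfl1 : (1 : ℤ) ≤ ⌊1 / s⌋ := by
    exact_mod_cast Int.le_floor.2 (by exact_mod_cast h1s.le)
  have hk1 : (1 : ℤ) ≤ k := by omega
  have hfl_lb : (⌊1 / s⌋ : ℝ) ≤ 1 / s := Int.floor_le _
  have hfl_ne : (⌊1 / s⌋ : ℝ) ≠ 1 / s := by
    intro h
    exact hinv_irr ⟨⌊1 / s⌋, by exact_mod_cast h⟩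
  have hfl_lt : (⌊1 / s⌋ : ℝ) < 1 / s := lt_of_le_of_ne hfl_lb hfl_ne
  have h2lt : (2 : ℝ) ≤ (⌊1 / s⌋ : ℝ) := by
    have : (2 : ℤ) ≤ ⌊1 / s⌋ := by omega
    exact_mod_cast this
  have hs_half : s < 1/2 := by
    have h2 : (2 : ℝ) < 1 / s := lt_of_le_of_lt h2lt hfl_lt
    rw [lt_div_iff₀ hs0] at h2
    linarith
  -- floor of 1/(2s) is k
  have hkk : (⌊1 / s⌋ : ℝ) = 2 * k := by
    have : ⌊1 / s⌋ = 2 * k := by omega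
    exact_mod_cast this
  have hub : (1 : ℝ) / s < ⌊1 / s⌋ + 1 := Int.lt_floor_add_one _
  have hfloor2 : ⌊1 / (2 * s)⌋ = k := by
    rw [Int.floor_eq_iff]
    constructor
    · rw [le_div_iff₀ (by linarith : (0:ℝ) < 2 * s)]
      have h : (2 : ℝ) * k ≤ 1 / s := by rw [← hkk]; exact hfl_lb
      rw [le_div_iff₀ hs0] at h
      nlinarith
    · rw [div_lt_iff₀ (by linarith : (0:ℝ) < 2 * s)]
      have hkr : (1 : ℝ) / s < 2 * k + 1 := by rw [hkk] at hub; linarith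
      rw [div_lt_iff₀ hs0] at hkr
      nlinarith
  -- gauss s facts
  set g := gaussMap s with hg
  have hg_eq : g = 1 / s - ⌊1 / s⌋ := rfl
  have hg_pos : 0 < g := by rw [hg_eq]; linarith
  have hg_lt1 : g < 1 := by rw [hg_eq]; linarith
  have hRs : Rmap s = g / 2 := by
    rw [Rmap, if_pos hs_half, hfloor2, hg_eq, hkk]
    field_simp
  have hRs_half : Rmap s < 1/2 := by rw [hRs]; linarith
  refine ⟨hs_half, hRs_half, ?_⟩
  rw [Rmap, if_pos hRs_half, hRs]
  have h2g : 2 * (g / 2) = g := by ring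
  rw [h2g, gaussMap]
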